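/- arXiv:2412.17330 — 2 statements merged into one kernel-verified Lean document; each statement's English description precedes it below -/
import Mathlib

section
/- Let G be a tree grammar with finitely many nonterminals and finitely many rules, and cost function with cost(r) > 0 for every rule r. Then for every nonterminal X, if at least one program is generated from X, there exists a program generated from X of minimal cost, i.e., a program p₀ generated from X such that cost(p₀) ≤ cost(p) for every program p generated from X. -/
/-- Finitely-branching trees with nodes labeled by elements of `R` (derivation trees). -/
inductive Tree' (R : Type) : Type
  | node : R → List (Tree' R) → Tree' R

/-- The label of the root node. -/
def Tree'.rootLabel {R : Type} : Tree' R → R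
  | .node r _ => r

/-- A tree grammar: nonterminals `Γ`, derivation rules `R`, each rule having a
left-hand nonterminal and a list of argument nonterminals. -/
structure TreeGrammar where
  Γ : Type
  R : Type
  lhs : R → Γ
  args : R → List Γ

/-- Well-formed derivation trees (programs) of a tree grammar. -/
inductive TreeGrammar.WF (G : TreeGrammar) : Tree' G.R → Prop
  | node (r : G.R) (ts : List (Tree' G.R))
      (hlen : ts.length = (G.args r).length)
      (hwf : ∀ t ∈ ts, G.WF t)
      (hlhs : ∀ i : ℕ, (h : i < ts.length) →
        G.lhs (ts[i].rootLabel) = (G.args r)[i]'(hlen ▸ h)) :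
      G.WF (Tree'.node r ts)

/-- `p` is a program generated from the nonterminal `X`. -/
def TreeGrammar.GenFrom (G : TreeGrammar) (X : G.Γ) (p : Tree' G.R) : Prop :=
  G.WF p ∧ G.lhs p.rootLabel = X

/-- The cost of a program, extending a cost function on rules. -/
def costP {R : Type} (cost : R → ℝ) : Tree' R → ℝ
  | .node r ts => cost r + (ts.attach.map (fun t => costP cost t.1)).sum
decreasing_by
  have := List.sizeOf_lt_of_mem t.2
  simp only [Tree'.node.sizeOf_spec]
  omega

/-- The number of nodes of a derivation tree. -/
def sizeP {R : Type} : Tree' R → ℕ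
  | .node _ ts => 1 + (ts.attach.map (fun t => sizeP t.1)).sum
decreasing_by
  have := List.sizeOf_lt_of_mem t.2
  simp only [Tree'.node.sizeOf_spec]
  omega

/-- The depth of a derivation tree: number of nodes on a longest root-to-leaf path. -/
def depthP {R : Type} : Tree' R → ℕ
  | .node _ ts => 1 + (ts.attach.map (fun t => depthP t.1)).foldr max 0
decreasing_by
  have := List.sizeOf_lt_of_mem t.2
  simp only [Tree'.node.sizeOf_spec]
  omega

/-- `p'` is a successor of `p` with respect to the nonterminal `X`:
`p'` is generated from `X`, has strictly larger cost than `p`, and no program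
generated from `X` has cost strictly between the two. -/
def IsSucc (G : TreeGrammar) (cost : G.R → ℝ) (X : G.Γ) (p p' : Tree' G.R) : Prop :=
  G.GenFrom X p' ∧ costP cost p < costP cost p' ∧
    ∀ p'', G.GenFrom X p'' →
      ¬(costP cost p < costP cost p'' ∧ costP cost p'' < costP cost p')

/-- `X` occurs as the left-hand nonterminal of the rule labeling some node of the tree. -/
inductive OccursLhs (G : TreeGrammar) (X : G.Γ) : Tree' G.R → Prop
  | here (r : G.R) (ts : List (Tree' G.R)) : G.lhs r = X → OccursLhs G X (.node r ts)
  | there (r : G.R) (ts : List (Tree' G.R)) (t : Tree' G.R) :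
      t ∈ ts → OccursLhs G X t → OccursLhs G X (.node r ts)

/-- Condition (*): along every root-to-leaf path, no nonterminal occurs twice as the
left-hand nonterminal of the rules labeling the nodes on the path. -/
inductive StarCond (G : TreeGrammar) : Tree' G.R → Prop
  | node (r : G.R) (ts : List (Tree' G.R))
      (hsub : ∀ t ∈ ts, StarCond G t)
      (hnew : ∀ t ∈ ts, ¬ OccursLhs G (G.lhs r) t) :
      StarCond G (.node r ts)

/-- `IsSubtree s t`: `s` is the subtree of `t` rooted at some node of `t`. -/
inductive IsSubtree {R : Type} : Tree' R → Tree' R → Prop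
  | refl (t : Tree' R) : IsSubtree t t
  | child (s : Tree' R) (r : R) (ts : List (Tree' R)) (t : Tree' R) :
      t ∈ ts → IsSubtree s t → IsSubtree s (.node r ts)

/-- `IsStrictSubtree s t`: `s` is the subtree of `t` rooted at a strict descendant
of the root of `t`. -/
inductive IsStrictSubtree {R : Type} : Tree' R → Tree' R → Prop
  | child (s : Tree' R) (r : R) (ts : List (Tree' R)) (t : Tree' R) :
      t ∈ ts → IsSubtree s t → IsStrictSubtree s (.node r ts)

/-- The subtree of a tree at a given position (a list of child indices), if it exists. -/
def subtreeAt {R : Type} : Tree' R → List ℕ → Option (Tree' R)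
  | t, [] => some t
  | .node _ ts, i :: is =>
      match ts[i]? with
      | some t => subtreeAt t is
      | none => none

/-- Replacing the subtree at a given position by `q`. -/
def replaceAt {R : Type} : Tree' R → List ℕ → Tree' R → Tree' R
  | _, [], q => q
  | .node r ts, i :: is, q =>
      match ts[i]? with
      | some t => .node r (ts.set i (replaceAt t is q))
      | none => .node r ts

open scoped ENNReal in
/-- The Bellman operator associated with a tree grammar and a cost function. -/
noncomputable def bellman (G : TreeGrammar) (cost : G.R → ℝ) (c : G.Γ → ℝ≥0∞) : G.Γ → ℝ≥0∞ :=
  fun X => ⨅ r ∈ {r : G.R | G.lhs r = X},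
    (ENNReal.ofReal (cost r) + ((G.args r).map c).sum)

theorem treeInd {R : Type} (P : Tree' R → Prop)
    (h : ∀ r ts, (∀ t ∈ ts, P t) → P (.node r ts)) : ∀ t, P t
  | .node r ts => h r ts (fun t ht => treeInd P h t)
decreasing_by
  have := List.sizeOf_lt_of_mem ht
  simp only [Tree'.node.sizeOf_spec]
  omega

theorem le_foldr_max {a : ℕ} {l : List ℕ} (h : a ∈ l) : a ≤ l.foldr max 0 := by
  induction l with
  | nil => simp at h
  | cons b l ih =>
    rcases List.mem_cons.mp h with h | h
    · simp [h]
    · exact le_trans (ih h) (le_max_right _ _)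

theorem foldr_max_le_sum {α : Type*} (f g : α → ℕ) (l : List α)
    (h : ∀ x ∈ l, f x ≤ g x) : (l.map f).foldr max 0 ≤ (l.map g).sum := by
  induction l with
  | nil => simp
  | cons a l ih =>
    simp only [List.map_cons, List.foldr_cons, List.sum_cons]
    have h1 := h a (by simp)
    have h2 := ih (fun x hx => h x (by simp [hx]))
    omega

theorem depth_le_size {R : Type} (t : Tree' R) : depthP t ≤ sizeP t := by
  induction t using treeInd with
  | h r ts ih =>
    rw [depthP, sizeP]
    have := foldr_max_le_sum (fun t : {x // x ∈ ts} => depthP t.1)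
      (fun t => sizeP t.1) ts.attach (fun x _ => ih x.1 x.2)
    omega

theorem eps_size_le_cost {R : Type} (cost : R → ℝ) (ε : ℝ) (hε : ∀ r, ε ≤ cost r)
    (hε0 : 0 ≤ ε) (t : Tree' R) : ε * (sizeP t : ℝ) ≤ costP cost t := by
  induction t using treeInd with
  | h r ts ih =>
    rw [costP, sizeP]
    push_cast
    rw [mul_add, mul_one, List.map_map, ← List.sum_map_mul_left]
    refine add_le_add (hε r) (List.sum_le_sum ?_)
    intro x _
    exact ih x.1 x.2

theorem one_le_depth {R : Type} (t : Tree' R) : 1 ≤ depthP t := by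
  cases t; rw [depthP]; omega

theorem finite_wf_depth (G : TreeGrammar) [Fintype G.R] :
    ∀ n : ℕ, {p : Tree' G.R | G.WF p ∧ depthP p ≤ n}.Finite := by
  intro n
  induction n with
  | zero =>
    convert Set.finite_empty
    ext p
    simp only [Set.mem_setOf_eq, Set.mem_empty_iff_false, iff_false, not_and]
    intro _
    have := one_le_depth p
    omega
  | succ n ih =>
    set A := Finset.univ.sup (fun r : G.R => (G.args r).length) with hA
    haveI : Finite ↥{p : Tree' G.R | G.WF p ∧ depthP p ≤ n} := ih
    have h1 : {l : List ↥{p : Tree' G.R | G.WF p ∧ depthP p ≤ n} | l.length ≤ A}.Finite :=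
      List.finite_length_le _ A
    have hL : {l : List (Tree' G.R) | l.length ≤ A ∧
        ∀ t ∈ l, G.WF t ∧ depthP t ≤ n}.Finite := by
      refine Set.Finite.subset (h1.image (List.map Subtype.val)) ?_
      rintro l ⟨hlen, hmem⟩
      refine ⟨l.attach.map (fun x => ⟨x.1, hmem x.1 x.2⟩), by rw [Set.mem_setOf_eq, List.length_map, List.length_attach]; exact hlen, ?_⟩
      rw [List.map_map]
      simp
    refine Set.Finite.subset (((Set.finite_univ (α := G.R)).prod hL).image
      (fun q : G.R × List (Tree' G.R) => Tree'.node q.1 q.2)) ?_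
    rintro p ⟨hwf, hdep⟩
    obtain ⟨r, ts⟩ := p
    cases hwf with
    | node _ _ hlen hwfc hlhs =>
      refine ⟨(r, ts), ⟨Set.mem_univ _, ?_, ?_⟩, rfl⟩
      · rw [hlen, hA]; exact Finset.le_sup (f := fun r : G.R => (G.args r).length) (Finset.mem_univ r)
      · intro t ht
        refine ⟨hwfc t ht, ?_⟩
        rw [depthP] at hdep
        have : depthP t ≤ (ts.attach.map (fun x => depthP x.1)).foldr max 0 :=
          le_foldr_max (List.mem_map.mpr ⟨⟨t, ht⟩, List.mem_attach _ _, rfl⟩)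
        omega


/-- if some program is generated from `X`, then there is a program
generated from `X` of minimal cost. -/
theorem stmt6 (G : TreeGrammar) [Fintype G.Γ] [Fintype G.R] (cost : G.R → ℝ)
    (hpos : ∀ r, 0 < cost r) (X : G.Γ) (hne : ∃ p : Tree' G.R, G.GenFrom X p) :
    ∃ p₀ : Tree' G.R, G.GenFrom X p₀ ∧
      ∀ p : Tree' G.R, G.GenFrom X p → costP cost p₀ ≤ costP cost p := by
  obtain ⟨p₁, hp₁⟩ := hne
  haveI : Nonempty G.R := ⟨p₁.rootLabel⟩
  set ε := Finset.univ.inf' Finset.univ_nonempty cost with hε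
  have hεpos : 0 < ε := by
    rw [hε, Finset.lt_inf'_iff]
    exact fun r _ => hpos r
  have hεle : ∀ r, ε ≤ cost r := fun r => Finset.inf'_le cost (Finset.mem_univ r)
  set C := costP cost p₁ with hC
  set N := ⌈C / ε⌉₊ with hN
  set A := {p : Tree' G.R | G.GenFrom X p ∧ costP cost p ≤ C} with hAdef
  have hAfin : A.Finite := by
    refine Set.Finite.subset (finite_wf_depth G N) ?_
    rintro p ⟨⟨hwf, _⟩, hcost⟩
    refine ⟨hwf, ?_⟩
    have h1 : ε * (depthP p : ℝ) ≤ C := by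
      calc ε * (depthP p : ℝ) ≤ ε * (sizeP p : ℝ) := by
            apply mul_le_mul_of_nonneg_left _ hεpos.le
            exact_mod_cast depth_le_size p
        _ ≤ costP cost p := eps_size_le_cost cost ε hεle hεpos.le p
        _ ≤ C := hcost
    have h2 : (depthP p : ℝ) ≤ C / ε := (le_div_iff₀' hεpos).mpr h1
    have h3 : (depthP p : ℝ) ≤ (N : ℝ) := h2.trans (Nat.le_ceil _)
    exact_mod_cast h3
  have hAne : A.Nonempty := ⟨p₁, hp₁, le_refl _⟩
  obtain ⟨p₀, hp₀A, hmin⟩ := Set.exists_min_image A (costP cost) hAfin hAne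
  refine ⟨p₀, hp₀A.1, ?_⟩
  intro p hp
  by_cases h : costP cost p ≤ C
  · exact hmin p ⟨hp, h⟩
  · exact le_trans (hmin p₁ ⟨hp₁, le_refl _⟩) (le_of_not_ge h)
end

section
/- Let G be a tree grammar with cost function satisfying cost(r) > 0 for every rule r. Let p be a program generated from a nonterminal X, and suppose there exist two nodes n and n' of p such that n' is a strict descendant of n and the left-hand nonterminals of the rules labeling n and n' are equal. Then the set {cost(q) : q a program generated from X} is unbounded above; in particular, infinitely many programs are generated from X. -/
section Aux
variable {R : Type}

theorem Tree'.ind' {P : Tree' R → Prop}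
    (h : ∀ r ts, (∀ t ∈ ts, P t) → P (Tree'.node r ts)) : ∀ t, P t
  | .node r ts => h r ts (fun t ht => Tree'.ind' h t)
decreasing_by
  have := List.sizeOf_lt_of_mem ht
  simp only [Tree'.node.sizeOf_spec]
  omega

theorem costP_node (cost : R → ℝ) (r : R) (ts : List (Tree' R)) :
    costP cost (.node r ts) = cost r + (ts.map (costP cost)).sum := by
  rw [costP]
  congr 1
  rw [List.map_attach_eq_pmap]
  simp

theorem costP_pos (cost : R → ℝ) (hpos : ∀ r, 0 < cost r) : ∀ t, 0 < costP cost t := by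
  refine Tree'.ind' (fun r ts ih => ?_)
  rw [costP_node]
  have : 0 ≤ (ts.map (costP cost)).sum := by
    apply List.sum_nonneg
    intro x hx
    obtain ⟨t, ht, rfl⟩ := List.mem_map.mp hx
    exact le_of_lt (ih t ht)
  linarith [hpos r]

theorem sum_set (l : List ℝ) (i : ℕ) (a : ℝ) (h : i < l.length) :
    (l.set i a).sum = l.sum - l[i] + a := by
  induction l generalizing i with
  | nil => simp at h
  | cons x xs ih =>
      cases i with
      | zero => simp; ring
      | succ j =>
          simp only [List.set_cons_succ, List.sum_cons, List.getElem_cons_succ]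
          rw [ih j (by simpa using h)]
          ring

variable {G : TreeGrammar}

theorem costP_le_of_subtree (cost : G.R → ℝ) (hpos : ∀ r, 0 < cost r)
    {s t : Tree' G.R} (h : IsSubtree s t) : costP cost s ≤ costP cost t := by
  induction h with
  | refl => exact le_refl _
  | child r ts t ht hsub ih =>
      rw [costP_node]
      have h1 : costP cost t ≤ (ts.map (costP cost)).sum := by
        apply List.single_le_sum
        · intro x hx
          obtain ⟨u, hu, rfl⟩ := List.mem_map.mp hx
          exact le_of_lt (costP_pos cost hpos u)
        · exact List.mem_map.mpr ⟨t, ht, rfl⟩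
      linarith [hpos r]

theorem costP_lt_of_strict (cost : G.R → ℝ) (hpos : ∀ r, 0 < cost r)
    {s t : Tree' G.R} (h : IsStrictSubtree s t) : costP cost s < costP cost t := by
  cases h with
  | child r ts t ht hsub =>
      rw [costP_node]
      have h1 : costP cost t ≤ (ts.map (costP cost)).sum := by
        apply List.single_le_sum
        · intro x hx
          obtain ⟨u, hu, rfl⟩ := List.mem_map.mp hx
          exact le_of_lt (costP_pos cost hpos u)
        · exact List.mem_map.mpr ⟨t, ht, rfl⟩
      have := costP_le_of_subtree cost hpos hsub
      linarith [hpos r]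

theorem subtree_of_strict {s t : Tree' G.R} (h : IsStrictSubtree s t) : IsSubtree s t := by
  cases h with
  | child r ts u hu hs => exact IsSubtree.child _ r ts u hu hs

theorem wf_of_subtree {s t : Tree' G.R} (h : IsSubtree s t) : G.WF t → G.WF s := by
  induction h with
  | refl => exact id
  | child r ts t ht hsub ih =>
      intro hwf
      cases hwf with
      | node _ _ hlen hwf hlhs => exact ih (hwf t ht)

theorem graft (cost : G.R → ℝ) {p n : Tree' G.R} (hsub : IsSubtree n p) :
    G.WF p → ∀ m, G.WF m → G.lhs m.rootLabel = G.lhs n.rootLabel →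
      ∃ p', G.WF p' ∧ G.lhs p'.rootLabel = G.lhs p.rootLabel ∧
        costP cost p' = costP cost p + (costP cost m - costP cost n) := by
  induction hsub with
  | refl =>
      intro hwf m hm hl
      exact ⟨m, hm, hl, by ring⟩
  | child r ts t ht hsub ih =>
      intro hwf m hm hl
      cases hwf with
      | node _ _ hlen hwf hlhs =>
        obtain ⟨t', ht'wf, ht'lhs, ht'cost⟩ := ih (hwf t ht) m hm hl
        obtain ⟨i, hi, rfl⟩ := List.mem_iff_getElem.mp ht
        refine ⟨Tree'.node r (ts.set i t'), ?_, rfl, ?_⟩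
        · refine TreeGrammar.WF.node r _ (by simpa using hlen) ?_ ?_
          · intro u hu
            rcases List.mem_or_eq_of_mem_set hu with h | h
            · exact hwf u h
            · exact h ▸ ht'wf
          · intro j hj
            have hj' : j < ts.length := by simpa using hj
            rcases eq_or_ne j i with rfl | hne
            · rw [List.getElem_set_self]
              rw [ht'lhs]
              exact hlhs j hj'
            · rw [List.getElem_set_ne hne.symm]
              exact hlhs j hj'
        · rw [costP_node, costP_node, List.map_set, sum_set _ i _ (by simpa using hi)]
          simp only [List.getElem_map]
          rw [ht'cost]
          ring

/-- if a program generated from `X` has a node and a strict descendant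
with the same left-hand nonterminal, then the costs of programs generated from `X`
are unbounded above; in particular infinitely many programs are generated from `X`. -/
theorem stmt10 (G : TreeGrammar) (cost : G.R → ℝ) (hpos : ∀ r, 0 < cost r)
    (X : G.Γ) (p : Tree' G.R) (hp : G.GenFrom X p)
    (n n' : Tree' G.R) (hn : IsSubtree n p) (hn' : IsStrictSubtree n' n)
    (heq : G.lhs n.rootLabel = G.lhs n'.rootLabel) :
    (∀ B : ℝ, ∃ q : Tree' G.R, G.GenFrom X q ∧ B < costP cost q) ∧
      {q : Tree' G.R | G.GenFrom X q}.Infinite := by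
  classical
  have hsub' := subtree_of_strict hn'
  set δ := costP cost n - costP cost n' with hδdef
  have hδ : 0 < δ := by
    have := costP_lt_of_strict cost hpos hn'
    simp [hδdef]; linarith
  have hwf_n : G.WF n := wf_of_subtree hn hp.1
  have pump : ∀ k : ℕ, ∃ q, G.WF q ∧ G.lhs q.rootLabel = G.lhs n.rootLabel ∧
      costP cost n + k * δ ≤ costP cost q := by
    intro k
    induction k with
    | zero => exact ⟨n, hwf_n, rfl, by simp⟩
    | succ k ih =>
        obtain ⟨q, hq, hql, hqc⟩ := ih
        obtain ⟨q', hq', hql', hqc'⟩ := graft cost hsub' hwf_n q hq (hql.trans heq)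
        refine ⟨q', hq', hql'.trans rfl, ?_⟩
        rw [hqc']
        push_cast
        have : costP cost n - costP cost n' = δ := rfl
        linarith
  have main : ∀ B : ℝ, ∃ q : Tree' G.R, G.GenFrom X q ∧ B < costP cost q := by
    intro B
    obtain ⟨k, hk⟩ := exists_nat_gt ((B - costP cost p) / δ)
    obtain ⟨q, hq, hql, hqc⟩ := pump k
    obtain ⟨q', hq', hql', hqc'⟩ := graft cost hn hp.1 q hq hql
    refine ⟨q', ⟨hq', hql'.trans hp.2⟩, ?_⟩
    rw [hqc']
    have : (B - costP cost p) < k * δ := by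
      rw [div_lt_iff₀ hδ] at hk
      linarith
    linarith
  refine ⟨main, ?_⟩
  intro hfin
  have hfin' : (Set.image (costP cost) {q : Tree' G.R | G.GenFrom X q}).Finite :=
    hfin.image _
  obtain ⟨B, hB⟩ := hfin'.bddAbove
  obtain ⟨q, hq, hqc⟩ := main B
  exact absurd (hB (Set.mem_image_of_mem _ hq)) (not_le.mpr hqc)
end Aux
end
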